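/- Let k be a field, B = k[x,y,z,w], and S = k[xz, yz, xw, yw] ⊆ B. Let m₀ := x²zwS + xyzwS + y²zwS be the ideal of S generated by x²zw, xyzw, y²zw. Then the set of minimal primes of S over m₀ is exactly { q₁, q₂ } where q₁ := xzS + yzS and q₂ := xwS + ywS, and each of q₁ and q₂ has height 1 in S. -/

import Mathlib

open MvPolynomial

noncomputable section

/-- `S = k[xz, yz, xw, yw] ⊆ B = k[x,y,z,w]`, where `x = X 0`, `y = X 1`, `z = X 2`,
`w = X 3`. -/
def quadS (k : Type*) [Field k] : Subalgebra k (MvPolynomial (Fin 4) k) :=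
  Algebra.adjoin k ({X 0 * X 2, X 1 * X 2, X 0 * X 3, X 1 * X 3} : Set (MvPolynomial (Fin 4) k))

/-- `xz` as an element of `S`. -/
def sxz (k : Type*) [Field k] : ↥(quadS k) :=
  ⟨X 0 * X 2, Algebra.subset_adjoin (by simp)⟩

/-- `yz` as an element of `S`. -/
def syz (k : Type*) [Field k] : ↥(quadS k) :=
  ⟨X 1 * X 2, Algebra.subset_adjoin (by simp)⟩

/-- `xw` as an element of `S`. -/
def sxw (k : Type*) [Field k] : ↥(quadS k) :=
  ⟨X 0 * X 3, Algebra.subset_adjoin (by simp)⟩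

/-- `yw` as an element of `S`. -/
def syw (k : Type*) [Field k] : ↥(quadS k) :=
  ⟨X 1 * X 3, Algebra.subset_adjoin (by simp)⟩

/-- `x²zw` as an element of `S`. -/
def sx2zw (k : Type*) [Field k] : ↥(quadS k) :=
  ⟨X 0 ^ 2 * X 2 * X 3, by
    have h : (X 0 ^ 2 * X 2 * X 3 : MvPolynomial (Fin 4) k) = (X 0 * X 2) * (X 0 * X 3) := by
      ring
    rw [h]
    exact mul_mem (Algebra.subset_adjoin (by simp)) (Algebra.subset_adjoin (by simp))⟩

/-- `xyzw` as an element of `S`. -/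
def sxyzw (k : Type*) [Field k] : ↥(quadS k) :=
  ⟨X 0 * X 1 * X 2 * X 3, by
    have h : (X 0 * X 1 * X 2 * X 3 : MvPolynomial (Fin 4) k) = (X 0 * X 2) * (X 1 * X 3) := by
      ring
    rw [h]
    exact mul_mem (Algebra.subset_adjoin (by simp)) (Algebra.subset_adjoin (by simp))⟩

/-- `y²zw` as an element of `S`. -/
def sy2zw (k : Type*) [Field k] : ↥(quadS k) :=
  ⟨X 1 ^ 2 * X 2 * X 3, by
    have h : (X 1 ^ 2 * X 2 * X 3 : MvPolynomial (Fin 4) k) = (X 1 * X 2) * (X 1 * X 3) := by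
      ring
    rw [h]
    exact mul_mem (Algebra.subset_adjoin (by simp)) (Algebra.subset_adjoin (by simp))⟩

/-- `q₁ = xzS + yzS`. -/
def q1 (k : Type*) [Field k] : Ideal ↥(quadS k) :=
  Ideal.span ({sxz k, syz k} : Set ↥(quadS k))

/-- `q₂ = xwS + ywS`. -/
def q2 (k : Type*) [Field k] : Ideal ↥(quadS k) :=
  Ideal.span ({sxw k, syw k} : Set ↥(quadS k))
section Aux

set_option maxHeartbeats 1000000
set_option synthInstance.maxHeartbeats 400000

variable {k : Type*} [Field k]

local notation "B" => MvPolynomial (Fin 4) k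

/-- Exponents appearing in elements of `quadS`. -/
def QGood (m : Fin 4 →₀ ℕ) : Prop := m 0 + m 1 = m 2 + m 3

lemma qgood_def (m : Fin 4 →₀ ℕ) : QGood m ↔ m 0 + m 1 = m 2 + m 3 := Iff.rfl

lemma X_mul_X_eq (i j : Fin 4) :
    (X i * X j : B) = monomial (Finsupp.single i 1 + Finsupp.single j 1) 1 := by
  rw [X, X, monomial_mul, one_mul]

lemma qgood_of_mem_quadS {f : B} (hf : f ∈ quadS k) : ∀ m ∈ f.support, QGood m := by
  induction hf using Algebra.adjoin_induction with
  | mem x hx =>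
    simp only [Set.mem_insert_iff, Set.mem_singleton_iff] at hx
    rcases hx with rfl | rfl | rfl | rfl <;>
    · intro m hm
      rw [X_mul_X_eq] at hm
      classical
      rw [support_monomial, if_neg (one_ne_zero)] at hm
      simp only [Finset.mem_singleton] at hm
      subst hm
      simp [qgood_def, Finsupp.single_apply]
  | algebraMap r =>
    intro m hm
    rw [algebraMap_eq] at hm
    rw [mem_support_iff, coeff_C] at hm
    have : m = 0 := by
      by_contra h
      exact hm (if_neg (fun h' => h h'.symm))
    subst this
    simp [qgood_def]
  | add x y hx hy ihx ihy =>
    intro m hm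
    rcases Finset.mem_union.mp (MvPolynomial.support_add hm) with h | h
    · exact ihx m h
    · exact ihy m h
  | mul x y hx hy ihx ihy =>
    intro m hm
    classical
    have := MvPolynomial.support_mul x y hm
    rw [Finset.mem_add] at this
    obtain ⟨a, ha, b, hb, rfl⟩ := this
    have h1 := ihx a ha
    have h2 := ihy b hb
    simp only [qgood_def, Finsupp.add_apply] at h1 h2 ⊢
    omega

lemma monomial_factor (i j : Fin 4) (m : Fin 4 →₀ ℕ) (hi : m i ≠ 0) (hj : m j ≠ 0)
    (hne : i ≠ j) (r : k) :
    (monomial m r : B) =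
      (X i * X j) * monomial (m - Finsupp.single i 1 - Finsupp.single j 1) r := by
  have key : Finsupp.single i 1 + Finsupp.single j 1
      + (m - Finsupp.single i 1 - Finsupp.single j 1) = m := by
    ext l
    simp only [Finsupp.add_apply, Finsupp.tsub_apply, Finsupp.single_apply]
    by_cases h1 : i = l
    · subst h1
      by_cases h2 : j = i
      · exact absurd h2.symm hne
      · rw [if_pos rfl, if_neg h2]
        omega
    · by_cases h2 : j = l
      · subst h2
        rw [if_neg h1, if_pos rfl]
        omega
      · rw [if_neg h1, if_neg h2]
        omega
  rw [X_mul_X_eq, monomial_mul, one_mul, key]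

lemma qgood_sub (i j : Fin 4) (hi : i = 0 ∨ i = 1) (hj : j = 2 ∨ j = 3) (m : Fin 4 →₀ ℕ)
    (hg : QGood m) (hmi : m i ≠ 0) (hmj : m j ≠ 0) :
    QGood (m - Finsupp.single i 1 - Finsupp.single j 1) := by
  rcases hi with rfl | rfl <;> rcases hj with rfl | rfl <;>
    (simp only [qgood_def, Finsupp.tsub_apply, Finsupp.single_apply, Fin.reduceEq,
      reduceIte] at hg hmi hmj ⊢; omega)

lemma monomial_mem_quadS_aux :
    ∀ (n : ℕ) (m : Fin 4 →₀ ℕ), m 0 + m 1 = n → QGood m → ∀ r : k,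
      (monomial m r : B) ∈ quadS k := by
  intro n
  induction n using Nat.strong_induction_on with
  | _ n ih =>
    intro m hn hg r
    rcases Nat.eq_zero_or_pos n with rfl | hpos
    · have h0 : m 0 = 0 := by omega
      have h1 : m 1 = 0 := by omega
      have h2 : m 2 = 0 := by rw [qgood_def] at hg; omega
      have h3 : m 3 = 0 := by rw [qgood_def] at hg; omega
      have hm0 : m = 0 := by
        ext l
        fin_cases l
        · exact h0
        · exact h1
        · exact h2
        · exact h3
      subst hm0
      rw [monomial_zero', ← algebraMap_eq]
      exact Subalgebra.algebraMap_mem _ r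
    · have h01 : m 0 ≠ 0 ∨ m 1 ≠ 0 := by omega
      have h23 : m 2 ≠ 0 ∨ m 3 ≠ 0 := by rw [qgood_def] at hg; omega
      have key : ∀ (i j : Fin 4), i = 0 ∨ i = 1 → j = 2 ∨ j = 3 → m i ≠ 0 → m j ≠ 0 →
          (X i * X j : B) ∈ quadS k → (monomial m r : B) ∈ quadS k := by
        intro i j hi hj hmi hmj hgen
        have hne : i ≠ j := by rcases hi with rfl | rfl <;> rcases hj with rfl | rfl <;> decide
        rw [monomial_factor i j m hmi hmj hne r]
        refine mul_mem hgen ?_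
        have hcoords : (m - Finsupp.single i 1 - Finsupp.single j 1 : Fin 4 →₀ ℕ) 0
            + (m - Finsupp.single i 1 - Finsupp.single j 1 : Fin 4 →₀ ℕ) 1 = n - 1 := by
          rcases hi with rfl | rfl <;> rcases hj with rfl | rfl <;>
            (simp only [Finsupp.tsub_apply, Finsupp.single_apply, Fin.reduceEq,
              reduceIte] at hmi hmj ⊢; omega)
        exact ih (n - 1) (by omega) _ hcoords (qgood_sub i j hi hj m hg hmi hmj) r
      rcases h01 with h01 | h01 <;> rcases h23 with h23 | h23
      · exact key 0 2 (Or.inl rfl) (Or.inl rfl) h01 h23 (sxz k).2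
      · exact key 0 3 (Or.inl rfl) (Or.inr rfl) h01 h23 (sxw k).2
      · exact key 1 2 (Or.inr rfl) (Or.inl rfl) h01 h23 (syz k).2
      · exact key 1 3 (Or.inr rfl) (Or.inr rfl) h01 h23 (syw k).2

lemma monomial_mem_quadS (m : Fin 4 →₀ ℕ) (hg : QGood m) (r : k) :
    (monomial m r : B) ∈ quadS k :=
  monomial_mem_quadS_aux _ m rfl hg r

lemma mem_quadS_of_good_support (f : B) (h : ∀ m ∈ f.support, QGood m) : f ∈ quadS k := by
  rw [← support_sum_monomial_coeff f]
  exact sum_mem fun m hm => monomial_mem_quadS m (h m hm) _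
lemma prime_X_mv (j : Fin 4) : Prime (X j : B) := by
  classical
  let e := ((renameEquiv k (Equiv.swap j (0 : Fin 4))).trans (finSuccEquiv k 3))
  have he : e (X j) = Polynomial.X := by
    simp [e, renameEquiv_apply, rename_X, Equiv.swap_apply_left, finSuccEquiv_X_zero]
  have := (MulEquiv.prime_iff (e.toRingEquiv.toMulEquiv)).mp
    (show Prime (e (X j)) by rw [he]; exact Polynomial.prime_X)
  exact this

lemma X_mem_span_iff (j : Fin 4) (f : B) :
    f ∈ Ideal.span {(X j : B)} ↔ ∀ m ∈ f.support, m j ≠ 0 := by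
  rw [← Set.image_singleton, mem_ideal_span_X_image]
  simp

lemma mem_span_pair_iff_support (j : Fin 4) (hj : j = 2 ∨ j = 3) (u v : ↥(quadS k))
    (hu : (u : B) = X 0 * X j) (hv : (v : B) = X 1 * X j) (f : ↥(quadS k)) :
    f ∈ Ideal.span {u, v} ↔ ∀ m ∈ (f : B).support, m j ≠ 0 := by
  constructor
  · intro h m hm
    obtain ⟨a, b, hab⟩ := Ideal.mem_span_pair.mp h
    have hB : (f : B) ∈ Ideal.span ({(X j : B)} : Set B) := by
      have hcoe : ((a * u + b * v : ↥(quadS k)) : B)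
          = (a : B) * (X 0 * X j) + (b : B) * (X 1 * X j) := by
        push_cast [hu, hv]
        ring
      rw [← hab, hcoe]
      exact Ideal.add_mem _
        (Ideal.mul_mem_left _ _ (Ideal.mul_mem_left _ _ (Ideal.subset_span rfl)))
        (Ideal.mul_mem_left _ _ (Ideal.mul_mem_left _ _ (Ideal.subset_span rfl)))
    exact (X_mem_span_iff j _).mp hB m hm
  · intro h
    have hgood := qgood_of_mem_quadS f.2
    have hf : f = ∑ x ∈ (f : B).support.attach,
        (⟨monomial x.1 (coeff x.1 (f : B)), monomial_mem_quadS x.1 (hgood x.1 x.2) _⟩ :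
          ↥(quadS k)) := by
      apply Subtype.ext
      push_cast
      rw [Finset.sum_attach ((f : B).support) (fun m => (monomial m (coeff m (f : B)) : B))]
      exact (support_sum_monomial_coeff (f : B)).symm
    rw [hf]
    refine Ideal.sum_mem _ ?_
    rintro ⟨m, hm⟩ -
    have hmj := h m hm
    have hg := hgood m hm
    have main : ∀ t : ↥(quadS k), (t : B) = monomial m (coeff m (f : B)) →
        t ∈ Ideal.span {u, v} := by
      intro t ht
      have h01 : m 0 ≠ 0 ∨ m 1 ≠ 0 := by
        rw [qgood_def] at hg
        rcases hj with rfl | rfl <;> omega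
      rcases h01 with h01 | h01
      · have hne : (0 : Fin 4) ≠ j := by rcases hj with rfl | rfl <;> decide
        have heq : t = u * ⟨monomial (m - Finsupp.single 0 1 - Finsupp.single j 1)
            (coeff m (f : B)),
            monomial_mem_quadS _ (qgood_sub 0 j (Or.inl rfl) hj m hg h01 hmj) _⟩ := by
          apply Subtype.ext
          push_cast [ht, hu]
          exact monomial_factor 0 j m h01 hmj hne _
        rw [heq]
        exact Ideal.mul_mem_right _ _ (Ideal.subset_span (Set.mem_insert _ _))
      · have hne : (1 : Fin 4) ≠ j := by rcases hj with rfl | rfl <;> decide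
        have heq : t = v * ⟨monomial (m - Finsupp.single 1 1 - Finsupp.single j 1)
            (coeff m (f : B)),
            monomial_mem_quadS _ (qgood_sub 1 j (Or.inr rfl) hj m hg h01 hmj) _⟩ := by
          apply Subtype.ext
          push_cast [ht, hv]
          exact monomial_factor 1 j m h01 hmj hne _
        rw [heq]
        exact Ideal.mul_mem_right _ _
          (Ideal.subset_span (Set.mem_insert_of_mem _ rfl))
    exact main _ rfl

lemma mem_span_pair_iff_val (j : Fin 4) (hj : j = 2 ∨ j = 3) (u v : ↥(quadS k))
    (hu : (u : B) = X 0 * X j) (hv : (v : B) = X 1 * X j) (f : ↥(quadS k)) :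
    f ∈ Ideal.span {u, v} ↔ (f : B) ∈ Ideal.span {(X j : B)} :=
  (mem_span_pair_iff_support j hj u v hu hv f).trans (X_mem_span_iff j _).symm

lemma span_pair_isPrime (j : Fin 4) (hj : j = 2 ∨ j = 3) (u v : ↥(quadS k))
    (hu : (u : B) = X 0 * X j) (hv : (v : B) = X 1 * X j) :
    (Ideal.span {u, v}).IsPrime := by
  have hXprime : (Ideal.span {(X j : B)}).IsPrime :=
    (Ideal.span_singleton_prime (X_ne_zero j)).mpr (prime_X_mv j)
  constructor
  · intro htop
    have h1 : (1 : ↥(quadS k)) ∈ Ideal.span {u, v} := htop ▸ Submodule.mem_top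
    have h2 := (mem_span_pair_iff_val j hj u v hu hv 1).mp h1
    rw [OneMemClass.coe_one] at h2
    exact hXprime.ne_top ((Ideal.eq_top_iff_one _).mpr h2)
  · intro a b hab
    have h2 := (mem_span_pair_iff_val j hj u v hu hv (a * b)).mp hab
    rw [MulMemClass.coe_mul] at h2
    rcases hXprime.mem_or_mem h2 with h | h
    · exact Or.inl ((mem_span_pair_iff_val j hj u v hu hv a).mpr h)
    · exact Or.inr ((mem_span_pair_iff_val j hj u v hu hv b).mpr h)

lemma q1_isPrime : (q1 k).IsPrime :=
  span_pair_isPrime 2 (Or.inl rfl) _ _ rfl rfl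

lemma q2_isPrime : (q2 k).IsPrime :=
  span_pair_isPrime 3 (Or.inr rfl) _ _ rfl rfl

lemma mem_q1_iff (f : ↥(quadS k)) : f ∈ q1 k ↔ ∀ m ∈ (f : B).support, m 2 ≠ 0 :=
  mem_span_pair_iff_support 2 (Or.inl rfl) _ _ rfl rfl f

lemma mem_q2_iff (f : ↥(quadS k)) : f ∈ q2 k ↔ ∀ m ∈ (f : B).support, m 3 ≠ 0 :=
  mem_span_pair_iff_support 3 (Or.inr rfl) _ _ rfl rfl f

lemma sxw_not_mem_q1 : sxw k ∉ q1 k := by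
  rw [mem_q1_iff]
  push_neg
  refine ⟨Finsupp.single 0 1 + Finsupp.single 3 1, ?_, ?_⟩
  · have h : ((sxw k : B)) = monomial (Finsupp.single 0 1 + Finsupp.single 3 1) 1 :=
      X_mul_X_eq 0 3
    rw [h]
    classical
    rw [support_monomial, if_neg one_ne_zero]
    exact Finset.mem_singleton_self _
  · simp [Finsupp.single_apply, Fin.reduceEq]

lemma sxz_not_mem_q2 : sxz k ∉ q2 k := by
  rw [mem_q2_iff]
  push_neg
  refine ⟨Finsupp.single 0 1 + Finsupp.single 2 1, ?_, ?_⟩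
  · have h : ((sxz k : B)) = monomial (Finsupp.single 0 1 + Finsupp.single 2 1) 1 :=
      X_mul_X_eq 0 2
    rw [h]
    classical
    rw [support_monomial, if_neg one_ne_zero]
    exact Finset.mem_singleton_self _
  · simp [Finsupp.single_apply, Fin.reduceEq]
lemma q1_def : q1 k = Ideal.span {sxz k, syz k} := rfl

lemma q2_def : q2 k = Ideal.span {sxw k, syw k} := rfl

lemma sxz_mul_sxw : sxz k * sxw k = sx2zw k :=
  Subtype.ext (by show (X 0 * X 2 : B) * (X 0 * X 3) = X 0 ^ 2 * X 2 * X 3; ring)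

lemma sxz_mul_syw : sxz k * syw k = sxyzw k :=
  Subtype.ext (by show (X 0 * X 2 : B) * (X 1 * X 3) = X 0 * X 1 * X 2 * X 3; ring)

lemma syz_mul_sxw : syz k * sxw k = sxyzw k :=
  Subtype.ext (by show (X 1 * X 2 : B) * (X 0 * X 3) = X 0 * X 1 * X 2 * X 3; ring)

lemma syz_mul_syw : syz k * syw k = sy2zw k :=
  Subtype.ext (by show (X 1 * X 2 : B) * (X 1 * X 3) = X 1 ^ 2 * X 2 * X 3; ring)

lemma sxz_mem_q1 : sxz k ∈ q1 k := Ideal.subset_span (Set.mem_insert _ _)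
lemma syz_mem_q1 : syz k ∈ q1 k := Ideal.subset_span (Set.mem_insert_of_mem _ rfl)
lemma sxw_mem_q2 : sxw k ∈ q2 k := Ideal.subset_span (Set.mem_insert _ _)
lemma syw_mem_q2 : syw k ∈ q2 k := Ideal.subset_span (Set.mem_insert_of_mem _ rfl)

lemma m0_le_q1 : Ideal.span {sx2zw k, sxyzw k, sy2zw k} ≤ q1 k := by
  rw [Ideal.span_le]
  intro x hx
  simp only [Set.mem_insert_iff, Set.mem_singleton_iff] at hx
  rcases hx with rfl | rfl | rfl
  · rw [← sxz_mul_sxw]; exact Ideal.mul_mem_right _ _ sxz_mem_q1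
  · rw [← sxz_mul_syw]; exact Ideal.mul_mem_right _ _ sxz_mem_q1
  · rw [← syz_mul_syw]; exact Ideal.mul_mem_right _ _ syz_mem_q1

lemma m0_le_q2 : Ideal.span {sx2zw k, sxyzw k, sy2zw k} ≤ q2 k := by
  rw [Ideal.span_le]
  intro x hx
  simp only [Set.mem_insert_iff, Set.mem_singleton_iff] at hx
  rcases hx with rfl | rfl | rfl
  · rw [← sxz_mul_sxw, mul_comm]; exact Ideal.mul_mem_right _ _ sxw_mem_q2
  · rw [← sxz_mul_syw, mul_comm]; exact Ideal.mul_mem_right _ _ syw_mem_q2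
  · rw [← syz_mul_syw, mul_comm]; exact Ideal.mul_mem_right _ _ syw_mem_q2

lemma q1_mul_q2_le_m0 : q1 k * q2 k ≤ Ideal.span {sx2zw k, sxyzw k, sy2zw k} := by
  refine Ideal.mul_le.mpr ?_
  intro r hr s hs
  rw [q1_def] at hr
  rw [q2_def] at hs
  obtain ⟨a, b, hab⟩ := Ideal.mem_span_pair.mp hr
  obtain ⟨c, d, hcd⟩ := Ideal.mem_span_pair.mp hs
  have hm1 : sx2zw k ∈ Ideal.span {sx2zw k, sxyzw k, sy2zw k} :=
    Ideal.subset_span (Set.mem_insert _ _)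
  have hm2 : sxyzw k ∈ Ideal.span {sx2zw k, sxyzw k, sy2zw k} :=
    Ideal.subset_span (Set.mem_insert_of_mem _ (Set.mem_insert _ _))
  have hm3 : sy2zw k ∈ Ideal.span {sx2zw k, sxyzw k, sy2zw k} :=
    Ideal.subset_span (Set.mem_insert_of_mem _ (Set.mem_insert_of_mem _ rfl))
  have expand : r * s = (a * c) * (sxz k * sxw k) + (a * d) * (sxz k * syw k)
      + (b * c) * (syz k * sxw k) + (b * d) * (syz k * syw k) := by
    rw [← hab, ← hcd]; ring
  rw [expand, sxz_mul_sxw, sxz_mul_syw, syz_mul_sxw, syz_mul_syw]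
  exact add_mem (add_mem (add_mem (Ideal.mul_mem_left _ _ hm1) (Ideal.mul_mem_left _ _ hm2))
    (Ideal.mul_mem_left _ _ hm2)) (Ideal.mul_mem_left _ _ hm3)

lemma prime_le_cases {p : Ideal ↥(quadS k)} (hp : p.IsPrime)
    (hm : Ideal.span {sx2zw k, sxyzw k, sy2zw k} ≤ p) : q1 k ≤ p ∨ q2 k ≤ p :=
  hp.mul_le.mp (q1_mul_q2_le_m0.trans hm)

lemma q1_mem_minimalPrimes :
    q1 k ∈ (Ideal.span {sx2zw k, sxyzw k, sy2zw k}).minimalPrimes := by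
  constructor
  · exact ⟨q1_isPrime, m0_le_q1⟩
  · rintro p ⟨hp, hmp⟩ hple
    rcases prime_le_cases hp hmp with h | h
    · exact h
    · exact absurd (hple (h sxw_mem_q2)) sxw_not_mem_q1

lemma q2_mem_minimalPrimes :
    q2 k ∈ (Ideal.span {sx2zw k, sxyzw k, sy2zw k}).minimalPrimes := by
  constructor
  · exact ⟨q2_isPrime, m0_le_q2⟩
  · rintro p ⟨hp, hmp⟩ hple
    rcases prime_le_cases hp hmp with h | h
    · exact absurd (hple (h sxz_mem_q1)) sxz_not_mem_q2
    · exact h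

lemma minimalPrimes_eq :
    (Ideal.span {sx2zw k, sxyzw k, sy2zw k}).minimalPrimes = {q1 k, q2 k} := by
  ext q
  constructor
  · rintro ⟨⟨hq, hmq⟩, hmin⟩
    rcases prime_le_cases hq hmq with h | h
    · exact Or.inl (le_antisymm (hmin ⟨q1_isPrime, m0_le_q1⟩ h) h)
    · exact Or.inr (le_antisymm (hmin ⟨q2_isPrime, m0_le_q2⟩ h) h)
  · rintro (rfl | rfl)
    · exact q1_mem_minimalPrimes
    · exact q2_mem_minimalPrimes

lemma prime_lt_span_pair (j j' : Fin 4) (hjj : j = 2 ∨ j = 3) (hj' : j' = 2 ∨ j' = 3)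
    (hne : j ≠ j') (u v u' v' : ↥(quadS k)) (hu : (u : B) = X 0 * X j)
    (hv : (v : B) = X 1 * X j) (hu' : (u' : B) = X 0 * X j') (hv' : (v' : B) = X 1 * X j')
    (p : Ideal ↥(quadS k)) (hp : p.IsPrime) (hle : p ≤ Ideal.span {u, v}) (hne0 : p ≠ ⊥) :
    Ideal.span {u, v} ≤ p := by
  classical
  obtain ⟨f, hfp, hf0⟩ := Submodule.exists_mem_ne_zero_of_ne_bot hne0
  have hfB : (f : B) ≠ 0 := by simpa using hf0
  obtain ⟨mm, h, hnd, hfeq⟩ := WfDvdMonoid.max_power_factor hfB (prime_X_mv j).irreducible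
  have hhsupp : ∀ mh ∈ h.support, (mh + Finsupp.single j mm) ∈ (f : B).support := by
    intro mh hmh
    rw [mem_support_iff]
    have hc : coeff (mh + Finsupp.single j mm) (f : B) = coeff mh h := by
      rw [hfeq, X_pow_eq_monomial, mul_comm, coeff_mul_monomial, mul_one]
    rw [hc]
    exact mem_support_iff.mp hmh
  have hgmem : (h * X j' ^ mm : B) ∈ quadS k := by
    apply mem_quadS_of_good_support
    intro m' hm'
    have hsub := support_mul h (X j' ^ mm : B) hm'
    rw [X_pow_eq_monomial, support_monomial, if_neg (one_ne_zero' k)] at hsub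
    rw [Finset.mem_add] at hsub
    obtain ⟨mh, hmh, ms, hms, rfl⟩ := hsub
    rw [Finset.mem_singleton] at hms
    subst hms
    have hgf := qgood_of_mem_quadS f.2 _ (hhsupp mh hmh)
    rw [qgood_def] at hgf ⊢
    simp only [Finsupp.add_apply, Finsupp.single_apply] at hgf ⊢
    rcases hjj with rfl | rfl <;> rcases hj' with rfl | rfl <;>
      first
        | exact absurd rfl hne
        | (simp only [Fin.reduceEq, reduceIte, if_true, if_false] at hgf ⊢; omega)
  set g : ↥(quadS k) := ⟨h * X j' ^ mm, hgmem⟩ with hgdef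
  have hgnot : g ∉ Ideal.span {u, v} := by
    rw [mem_span_pair_iff_support j hjj u v hu hv]
    push_neg
    have hex : ¬(∀ m ∈ h.support, m j ≠ 0) := by
      intro hall
      exact hnd (Ideal.mem_span_singleton.mp ((X_mem_span_iff j h).mpr hall))
    push_neg at hex
    obtain ⟨mh0, hmh0, hmh0j⟩ := hex
    refine ⟨mh0 + Finsupp.single j' mm, ?_, ?_⟩
    · rw [mem_support_iff]
      show coeff (mh0 + Finsupp.single j' mm) (h * X j' ^ mm) ≠ 0
      rw [X_pow_eq_monomial, coeff_mul_monomial, mul_one]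
      exact mem_support_iff.mp hmh0
    · simp only [Finsupp.add_apply, Finsupp.single_apply, hmh0j]
      rw [if_neg hne.symm]
      rfl
  have hid1 : f * u' ^ mm = u ^ mm * g := by
    apply Subtype.ext
    show (f : B) * (u' : B) ^ mm = (u : B) ^ mm * (h * X j' ^ mm)
    rw [hu, hu', hfeq]
    ring
  have hup : u ∈ p := by
    have hmem : u ^ mm * g ∈ p := hid1 ▸ Ideal.mul_mem_right _ _ hfp
    rcases hp.mem_or_mem hmem with h' | h'
    · exact hp.mem_of_pow_mem _ h'
    · exact absurd (hle h') hgnot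
  have hvp : v ∈ p := by
    have hid2 : f * v' ^ mm = v ^ mm * g := by
      apply Subtype.ext
      show (f : B) * (v' : B) ^ mm = (v : B) ^ mm * (h * X j' ^ mm)
      rw [hv, hv', hfeq]
      ring
    have hmem : v ^ mm * g ∈ p := hid2 ▸ Ideal.mul_mem_right _ _ hfp
    rcases hp.mem_or_mem hmem with h' | h'
    · exact hp.mem_of_pow_mem _ h'
    · exact absurd (hle h') hgnot
  rw [Ideal.span_le]
  intro x hx
  rcases hx with rfl | hx
  · exact hup
  · rw [Set.mem_singleton_iff] at hx
    subst hx
    exact hvp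
instance quadS_isDomain : IsDomain ↥(quadS k) := by infer_instance

lemma height_eq_one (Q : Ideal ↥(quadS k)) (hQ : Q.IsPrime)
    (hbot : ∀ p : Ideal ↥(quadS k), p.IsPrime → p ≤ Q → p ≠ ⊥ → Q ≤ p) (hQne : Q ≠ ⊥) :
    Order.height (⟨Q, hQ⟩ : PrimeSpectrum ↥(quadS k)) = 1 := by
  have hmin : ∀ y : PrimeSpectrum ↥(quadS k), y < ⟨Q, hQ⟩ → Order.height y = 0 := by
    intro y hy
    rw [Order.height_eq_zero]
    have hybot : y.asIdeal = ⊥ := by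
      by_contra hyne
      have hQle : Q ≤ y.asIdeal := hbot y.asIdeal y.isPrime hy.le hyne
      exact hy.not_ge hQle
    intro z hz
    have hzbot : z.asIdeal = ⊥ := le_bot_iff.mp (hybot ▸ (hz : z.asIdeal ≤ y.asIdeal))
    show y.asIdeal ≤ z.asIdeal
    rw [hybot, hzbot]
  have hle : Order.height (⟨Q, hQ⟩ : PrimeSpectrum ↥(quadS k)) ≤ 1 := by
    rw [show (1 : ℕ∞) = ((1 : ℕ) : ℕ∞) from rfl, Order.height_le_coe_iff]
    intro y hy
    rw [hmin y hy]
    exact zero_lt_one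
  have hbotprime : (⊥ : Ideal ↥(quadS k)).IsPrime := Ideal.bot_prime
  have hltpt : (⟨⊥, hbotprime⟩ : PrimeSpectrum ↥(quadS k)) < ⟨Q, hQ⟩ := by
    refine lt_of_le_of_ne (show (⊥ : Ideal ↥(quadS k)) ≤ Q from bot_le) (fun hcon => hQne ?_)
    exact (congrArg PrimeSpectrum.asIdeal hcon).symm
  have h0 : Order.height (⟨Q, hQ⟩ : PrimeSpectrum ↥(quadS k)) ≠ 0 := by
    rw [Ne, Order.height_eq_zero]
    intro hismin
    exact hltpt.not_ge (hismin hltpt.le)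
  exact le_antisymm hle (ENat.one_le_iff_ne_zero.mpr h0)

lemma q1_ne_bot : q1 k ≠ ⊥ := by
  intro hcon
  have hmem : sxz k ∈ q1 k := sxz_mem_q1
  rw [hcon, Submodule.mem_bot] at hmem
  have hval : (X 0 * X 2 : B) = 0 := congrArg Subtype.val hmem
  exact absurd hval (mul_ne_zero (X_ne_zero _) (X_ne_zero _))

lemma q2_ne_bot : q2 k ≠ ⊥ := by
  intro hcon
  have hmem : sxw k ∈ q2 k := sxw_mem_q2
  rw [hcon, Submodule.mem_bot] at hmem
  have hval : (X 0 * X 3 : B) = 0 := congrArg Subtype.val hmem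
  exact absurd hval (mul_ne_zero (X_ne_zero _) (X_ne_zero _))

lemma q1_height : Order.height (⟨q1 k, q1_isPrime⟩ : PrimeSpectrum ↥(quadS k)) = 1 := by
  refine height_eq_one _ _ ?_ q1_ne_bot
  intro p hp hle hne
  exact prime_lt_span_pair 2 3 (Or.inl rfl) (Or.inr rfl) (by decide)
    (sxz k) (syz k) (sxw k) (syw k) rfl rfl rfl rfl p hp hle hne

lemma q2_height : Order.height (⟨q2 k, q2_isPrime⟩ : PrimeSpectrum ↥(quadS k)) = 1 := by
  refine height_eq_one _ _ ?_ q2_ne_bot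
  intro p hp hle hne
  exact prime_lt_span_pair 3 2 (Or.inr rfl) (Or.inl rfl) (by decide)
    (sxw k) (syw k) (sxz k) (syz k) rfl rfl rfl rfl p hp hle hne

end Aux

/-- the set of minimal primes of `S` over `m₀ = x²zwS + xyzwS + y²zwS` is
exactly `{q₁, q₂}` where `q₁ = xzS + yzS` and `q₂ = xwS + ywS`, and each of `q₁`, `q₂`
has height `1` in `S`. -/
theorem minimal_primes_of_m0 (k : Type*) [Field k] :
    ∃ (h1 : (q1 k).IsPrime) (h2 : (q2 k).IsPrime),
      (Ideal.span ({sx2zw k, sxyzw k, sy2zw k} : Set ↥(quadS k))).minimalPrimes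
          = {q1 k, q2 k} ∧
      Order.height (⟨q1 k, h1⟩ : PrimeSpectrum ↥(quadS k)) = 1 ∧
      Order.height (⟨q2 k, h2⟩ : PrimeSpectrum ↥(quadS k)) = 1 := by
  exact ⟨q1_isPrime, q2_isPrime, minimalPrimes_eq, q1_height, q2_height⟩
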